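/- (Proposition: summed second-moment bound for AdaLVR with SAGA estimator.) In the AdaLVR-SAGA setup, it holds that E[ ∑_{t=1}^T ‖g^(t)‖² ] ≤ 8L ∑_{t=1}^T E[ f(x^(t)) − f(x*) ] + 4L n ( f(x^(1)) − f(x*) ). -/

import Mathlib

/-- State of the AdaLVR-SAGA algorithm after `t` steps, driven by the index sequence `idx`
(where the index used at step `t ≥ 1` is `idx t`).  The state at time `t` is the triple
`(x^{(t+1)}, ỹ^{(t)}, G_t)` where `G_t = ∑_{s=1}^t ‖g^{(s)}‖²` (so `A_t = √G_t`),
with initial state `(x^{(1)}, ỹ^{(0)}, 0)`. -/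
noncomputable def adaLVRstate (n d : ℕ) (f : Fin n → EuclideanSpace ℝ (Fin d) → ℝ)
    (proj : EuclideanSpace ℝ (Fin d) → EuclideanSpace ℝ (Fin d))
    (η : ℝ) (x1 : EuclideanSpace ℝ (Fin d)) (idx : ℕ → Fin n) :
    ℕ → EuclideanSpace ℝ (Fin d) × (Fin n → EuclideanSpace ℝ (Fin d)) × ℝ
  | 0 => (x1, fun _ => x1, 0)
  | (t + 1) =>
      let s := adaLVRstate n d f proj η x1 idx t
      let i := idx (t + 1)
      let g := gradient (f i) s.1 - gradient (f i) (s.2.1 i)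
        + (n : ℝ)⁻¹ • ∑ j, gradient (f j) (s.2.1 j)
      let G := s.2.2 + ‖g‖ ^ 2
      (proj (s.1 - (η / Real.sqrt G) • g), Function.update s.2.1 i s.1, G)

/-- The iterate `x^{(t)}` of AdaLVR-SAGA, for `t ≥ 1`. -/
noncomputable def adaLVRx (n d : ℕ) (f : Fin n → EuclideanSpace ℝ (Fin d) → ℝ)
    (proj : EuclideanSpace ℝ (Fin d) → EuclideanSpace ℝ (Fin d))
    (η : ℝ) (x1 : EuclideanSpace ℝ (Fin d)) (idx : ℕ → Fin n) (t : ℕ) :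
    EuclideanSpace ℝ (Fin d) :=
  (adaLVRstate n d f proj η x1 idx (t - 1)).1

/-- The SAGA gradient estimator `g^{(t)}` of AdaLVR-SAGA, for `t ≥ 1`. -/
noncomputable def adaLVRg (n d : ℕ) (f : Fin n → EuclideanSpace ℝ (Fin d) → ℝ)
    (proj : EuclideanSpace ℝ (Fin d) → EuclideanSpace ℝ (Fin d))
    (η : ℝ) (x1 : EuclideanSpace ℝ (Fin d)) (idx : ℕ → Fin n) (t : ℕ) :
    EuclideanSpace ℝ (Fin d) :=
  let s := adaLVRstate n d f proj η x1 idx (t - 1)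
  let i := idx t
  gradient (f i) s.1 - gradient (f i) (s.2.1 i)
    + (n : ℝ)⁻¹ • ∑ j, gradient (f j) (s.2.1 j)

/-- Extension of a finite index tuple `ω : Fin T → Fin n` to `ℕ`, so that the index used at
step `t ∈ {1, …, T}` is `ω (t - 1)`. -/
def extIdx {n : ℕ} (T : ℕ) (hT : 0 < T) (ω : Fin T → Fin n) : ℕ → Fin n :=
  fun t => ω ⟨(t - 1) % T, Nat.mod_lt _ hT⟩


open RealInnerProductSpace

variable {E : Type*} [NormedAddCommGroup E] [InnerProductSpace ℝ E] [CompleteSpace E]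

lemma my_hasDerivAt_line (f : E → ℝ) (hf : Differentiable ℝ f) (p v : E) (τ : ℝ) :
    HasDerivAt (fun s : ℝ => f (p + s • v)) ⟪gradient f (p + τ • v), v⟫ τ := by
  have hc : HasDerivAt (fun s : ℝ => p + s • v) v τ := by
    simpa using ((hasDerivAt_id τ).smul_const v).const_add p
  have hg := (hf (p + τ • v)).hasGradientAt.hasFDerivAt
  have := hg.comp_hasDerivAt τ hc
  simpa [InnerProductSpace.toDual_apply_apply, Function.comp_def] using this

lemma my_grad_ineq (f : E → ℝ) (hconv : ConvexOn ℝ Set.univ f) (hf : Differentiable ℝ f)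
    (x y : E) : f y + ⟪gradient f y, x - y⟫ ≤ f x := by
  have hg0 : HasDerivAt (fun s : ℝ => f (y + s • (x - y))) ⟪gradient f y, x - y⟫ 0 := by
    simpa using my_hasDerivAt_line f hf y (x - y) 0
  have hgconv : ConvexOn ℝ Set.univ (fun s : ℝ => f (y + s • (x - y))) := by
    have h := hconv.comp_affineMap (AffineMap.lineMap y x)
    rw [Set.preimage_univ] at h
    refine h.congr ?_
    intro s _
    simp [Function.comp, AffineMap.lineMap_apply]
    rw [add_comm]
  have := hgconv.le_slope_of_hasDerivAt (Set.mem_univ 0) (Set.mem_univ 1) one_pos hg0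
  simp only [slope_def_field] at this
  simp only [zero_smul, add_zero, one_smul] at this
  have hx1 : y + (x - y) = x := by abel
  rw [hx1] at this
  have : ⟪gradient f y, x - y⟫ ≤ f x - f y := by
    simpa [div_div_eq_mul_div] using this
  linarith

lemma my_descent (f : E → ℝ) (hf : Differentiable ℝ f) {L : ℝ} (hL : 0 < L)
    (hsm : ∀ a b, ‖gradient f a - gradient f b‖ ≤ L * ‖a - b‖) (x x' : E) :
    f x' ≤ f x + ⟪gradient f x, x' - x⟫ + L / 2 * ‖x' - x‖ ^ 2 := by
  set v := x' - x with hv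
  set ψ : ℝ → ℝ := fun s => f (x + s • v) - s * ⟪gradient f x, v⟫ - L / 2 * s ^ 2 * ‖v‖ ^ 2
    with hψ
  have hψd : ∀ s : ℝ, HasDerivAt ψ
      (⟪gradient f (x + s • v), v⟫ - ⟪gradient f x, v⟫ - L * s * ‖v‖ ^ 2) s := by
    intro s
    have h1 := my_hasDerivAt_line f hf x v s
    have h2 : HasDerivAt (fun s : ℝ => s * ⟪gradient f x, v⟫) ⟪gradient f x, v⟫ s := by
      simpa using (hasDerivAt_id s).mul_const (⟪gradient f x, v⟫)
    have h3 : HasDerivAt (fun s : ℝ => L / 2 * s ^ 2 * ‖v‖ ^ 2)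
        (L * s * ‖v‖ ^ 2) s := by
      have := ((hasDerivAt_pow 2 s).const_mul (L / 2)).mul_const (‖v‖ ^ 2)
      refine this.congr_deriv ?_
      ring
    exact (h1.sub h2).sub h3
  have hdiff : Differentiable ℝ ψ := fun s => (hψd s).differentiableAt
  have hanti : AntitoneOn ψ (Set.Icc 0 1) := by
    apply antitoneOn_of_deriv_nonpos (convex_Icc 0 1) hdiff.continuous.continuousOn
      (hdiff.differentiableOn)
    intro s hs
    rw [interior_Icc] at hs
    rw [(hψd s).deriv]
    have hb : ⟪gradient f (x + s • v) - gradient f x, v⟫ ≤ L * s * ‖v‖ ^ 2 := by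
      calc ⟪gradient f (x + s • v) - gradient f x, v⟫
          ≤ ‖gradient f (x + s • v) - gradient f x‖ * ‖v‖ := real_inner_le_norm _ _
        _ ≤ (L * ‖(x + s • v) - x‖) * ‖v‖ := by
            have := hsm (x + s • v) x
            nlinarith [norm_nonneg v]
        _ = L * s * ‖v‖ ^ 2 := by
            rw [add_sub_cancel_left, norm_smul, Real.norm_eq_abs, abs_of_pos hs.1]
            ring
    rw [inner_sub_left] at hb
    linarith
  have h01 := hanti (Set.left_mem_Icc.2 zero_le_one) (Set.right_mem_Icc.2 zero_le_one)
    zero_le_one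
  have hψ0 : ψ 0 = f x := by simp [hψ]
  have hψ1 : ψ 1 = f x' - ⟪gradient f x, v⟫ - L / 2 * ‖v‖ ^ 2 := by
    simp [hψ, hv]
  rw [hψ0, hψ1] at h01
  linarith

lemma my_cocoercive (f : E → ℝ) (hconv : ConvexOn ℝ Set.univ f) (hf : Differentiable ℝ f)
    {L : ℝ} (hL : 0 < L) (hsm : ∀ a b, ‖gradient f a - gradient f b‖ ≤ L * ‖a - b‖)
    (x y : E) :
    ‖gradient f x - gradient f y‖ ^ 2 ≤ 2 * L * (f x - f y - ⟪gradient f y, x - y⟫) := by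
  set w := gradient f x - gradient f y with hw
  have h1 := my_descent f hf hL hsm x (x - L⁻¹ • w)
  have h2 := my_grad_ineq f hconv hf (x - L⁻¹ • w) y
  have e1 : x - L⁻¹ • w - x = -(L⁻¹ • w) := by abel
  have e2 : x - L⁻¹ • w - y = (x - y) - L⁻¹ • w := by abel
  rw [e1] at h1
  rw [e2] at h2
  have hn1 : ‖-(L⁻¹ • w)‖ ^ 2 = L⁻¹ ^ 2 * ‖w‖ ^ 2 := by
    rw [norm_neg, norm_smul, Real.norm_eq_abs, abs_of_pos (inv_pos.2 hL)]
    ring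
  rw [hn1] at h1
  have hi1 : ⟪gradient f x, -(L⁻¹ • w)⟫ = -(L⁻¹ * ⟪gradient f x, w⟫) := by
    rw [inner_neg_right, real_inner_smul_right]
  have hi2 : ⟪gradient f y, x - y - L⁻¹ • w⟫
      = ⟪gradient f y, x - y⟫ - L⁻¹ * ⟪gradient f y, w⟫ := by
    rw [inner_sub_right, real_inner_smul_right]
  rw [hi1] at h1
  rw [hi2] at h2
  have hww : ⟪gradient f x, w⟫ - ⟪gradient f y, w⟫ = ‖w‖ ^ 2 := by
    rw [← inner_sub_left, ← hw, real_inner_self_eq_norm_sq]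
  have hL0 : L ≠ 0 := ne_of_gt hL
  have h3 : L⁻¹ * ⟪gradient f x, w⟫ - L⁻¹ * ⟪gradient f y, w⟫ = L⁻¹ * ‖w‖ ^ 2 := by
    rw [← mul_sub, hww]
  have h4 : L / 2 * (L⁻¹ ^ 2 * ‖w‖ ^ 2) = L⁻¹ / 2 * ‖w‖ ^ 2 := by
    field_simp
  have key : L⁻¹ / 2 * ‖w‖ ^ 2 ≤ f x - f y - ⟪gradient f y, x - y⟫ := by linarith
  calc ‖w‖ ^ 2 = 2 * L * (L⁻¹ / 2 * ‖w‖ ^ 2) := by field_simp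
    _ ≤ 2 * L * (f x - f y - ⟪gradient f y, x - y⟫) :=
        mul_le_mul_of_nonneg_left key (by positivity)

lemma my_sq_bound (a b : E) : ‖a - b‖ ^ 2 ≤ 2 * ‖a‖ ^ 2 + 2 * ‖b‖ ^ 2 := by
  have h1 := abs_real_inner_le_norm a b
  have h2 := abs_le.1 h1
  rw [norm_sub_sq_real]
  nlinarith [sq_nonneg (‖a‖ - ‖b‖)]

section detlemmas

variable {n : ℕ} (hn : 1 ≤ n) {L : ℝ} (hL : 0 < L)
  (f : Fin n → E → ℝ)
  (hconv : ∀ i, ConvexOn ℝ Set.univ (f i))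
  (hdiff : ∀ i, Differentiable ℝ (f i))
  (hsmooth : ∀ i x y, ‖gradient (f i) x - gradient (f i) y‖ ≤ L * ‖x - y‖)
  (xstar : E)
  (hstar : ∑ j, gradient (f j) xstar = 0)

include hn hL f hconv hdiff hsmooth hstar

lemma my_sumA (x : E) :
    ∑ i, ‖gradient (f i) x - gradient (f i) xstar‖ ^ 2
      ≤ 2 * L * (∑ i, f i x - ∑ i, f i xstar) := by
  have hc : ∀ i : Fin n, ‖gradient (f i) x - gradient (f i) xstar‖ ^ 2
      ≤ 2 * L * (f i x - f i xstar - ⟪gradient (f i) xstar, x - xstar⟫) := fun i =>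
    my_cocoercive (f i) (hconv i) (hdiff i) hL (hsmooth i) x xstar
  have hz : ∑ i, ⟪gradient (f i) xstar, x - xstar⟫ = 0 := by
    rw [← sum_inner, hstar, inner_zero_left]
  calc ∑ i, ‖gradient (f i) x - gradient (f i) xstar‖ ^ 2
      ≤ ∑ i, 2 * L * (f i x - f i xstar - ⟪gradient (f i) xstar, x - xstar⟫) :=
        Finset.sum_le_sum fun i _ => hc i
    _ = 2 * L * (∑ i, f i x - ∑ i, f i xstar) := by
        rw [← Finset.mul_sum, Finset.sum_sub_distrib, Finset.sum_sub_distrib, hz, sub_zero]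

lemma my_condG (x : E) (y : Fin n → E) :
    ∑ i, ‖gradient (f i) x - gradient (f i) (y i)
        + (n : ℝ)⁻¹ • ∑ j, gradient (f j) (y j)‖ ^ 2
      ≤ 4 * L * (∑ i, f i x - ∑ i, f i xstar)
        + 2 * ∑ j, ‖gradient (f j) (y j) - gradient (f j) xstar‖ ^ 2 := by
  have hn0 : (n : ℝ) ≠ 0 := Nat.cast_ne_zero.mpr (by omega)
  set A : Fin n → E := fun i => gradient (f i) x - gradient (f i) xstar with hA
  set C : Fin n → E := fun i => gradient (f i) (y i) - gradient (f i) xstar with hC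
  set m : E := (n : ℝ)⁻¹ • ∑ j, C j with hm
  have hmu : (n : ℝ)⁻¹ • ∑ j, gradient (f j) (y j) = m := by
    rw [hm]
    congr 1
    rw [hC]
    rw [Finset.sum_sub_distrib, hstar, sub_zero]
  have hgi : ∀ i : Fin n, gradient (f i) x - gradient (f i) (y i)
      + (n : ℝ)⁻¹ • ∑ j, gradient (f j) (y j) = A i - (C i - m) := by
    intro i
    rw [hmu, hA, hC]
    simp only
    abel
  have hsumC : ∑ j, C j = (n : ℝ) • m := by
    rw [hm, smul_smul, mul_inv_cancel₀ hn0, one_smul]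
  have hvar : ∑ i, ‖C i - m‖ ^ 2 ≤ ∑ i, ‖C i‖ ^ 2 := by
    have hexp : ∑ i, ‖C i - m‖ ^ 2
        = ∑ i, ‖C i‖ ^ 2 - 2 * ((n : ℝ) * ‖m‖ ^ 2) + (n : ℝ) * ‖m‖ ^ 2 := by
      have : ∀ i : Fin n, ‖C i - m‖ ^ 2 = ‖C i‖ ^ 2 - 2 * ⟪C i, m⟫ + ‖m‖ ^ 2 := fun i =>
        norm_sub_sq_real _ _
      rw [Finset.sum_congr rfl fun i _ => this i]
      rw [Finset.sum_add_distrib, Finset.sum_sub_distrib, ← Finset.mul_sum, ← sum_inner,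
        hsumC, real_inner_smul_left, real_inner_self_eq_norm_sq]
      simp [Finset.card_univ]
      try ring
    rw [hexp]
    nlinarith [sq_nonneg ‖m‖, (by exact_mod_cast hn : (1:ℝ) ≤ (n:ℝ))]
  calc ∑ i, ‖gradient (f i) x - gradient (f i) (y i)
        + (n : ℝ)⁻¹ • ∑ j, gradient (f j) (y j)‖ ^ 2
      = ∑ i, ‖A i - (C i - m)‖ ^ 2 := by
        exact Finset.sum_congr rfl fun i _ => by rw [hgi i]
    _ ≤ ∑ i, (2 * ‖A i‖ ^ 2 + 2 * ‖C i - m‖ ^ 2) :=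
        Finset.sum_le_sum fun i _ => my_sq_bound _ _
    _ = 2 * ∑ i, ‖A i‖ ^ 2 + 2 * ∑ i, ‖C i - m‖ ^ 2 := by
        rw [Finset.sum_add_distrib, Finset.mul_sum, Finset.mul_sum]
    _ ≤ 2 * (2 * L * (∑ i, f i x - ∑ i, f i xstar)) + 2 * ∑ i, ‖C i‖ ^ 2 := by
        have h1 := my_sumA hn hL f hconv hdiff hsmooth xstar hstar x
        have h2 := hvar
        nlinarith
    _ ≤ 4 * L * (∑ i, f i x - ∑ i, f i xstar)
        + 2 * ∑ j, ‖gradient (f j) (y j) - gradient (f j) xstar‖ ^ 2 := by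
        rw [hC]
        nlinarith [le_refl (0:ℝ)]

lemma my_condS (x : E) (y : Fin n → E) :
    ∑ i, ∑ j, ‖gradient (f j) (Function.update y i x j) - gradient (f j) xstar‖ ^ 2
      ≤ ((n : ℝ) - 1) * ∑ j, ‖gradient (f j) (y j) - gradient (f j) xstar‖ ^ 2
        + 2 * L * (∑ i, f i x - ∑ i, f i xstar) := by
  set B : Fin n → ℝ := fun j => ‖gradient (f j) (y j) - gradient (f j) xstar‖ ^ 2 with hB
  set A : Fin n → ℝ := fun j => ‖gradient (f j) x - gradient (f j) xstar‖ ^ 2 with hA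
  have hinner : ∀ i : Fin n,
      ∑ j, ‖gradient (f j) (Function.update y i x j) - gradient (f j) xstar‖ ^ 2
      = ∑ j, B j + (A i - B i) := by
    intro i
    have h1 : ∀ j : Fin n,
        ‖gradient (f j) (Function.update y i x j) - gradient (f j) xstar‖ ^ 2
        = B j + (if j = i then A j - B j else 0) := by
      intro j
      rw [Function.update_apply]
      by_cases h : j = i <;> simp [h, hA, hB]
    rw [Finset.sum_congr rfl fun j _ => h1 j, Finset.sum_add_distrib,
      Finset.sum_ite_eq' Finset.univ i (fun j => A j - B j)]
    simp
  have houter : ∑ i, ∑ j, ‖gradient (f j) (Function.update y i x j)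
        - gradient (f j) xstar‖ ^ 2
      = (n : ℝ) * ∑ j, B j + (∑ i, A i - ∑ i, B i) := by
    rw [Finset.sum_congr rfl fun i _ => hinner i, Finset.sum_add_distrib,
      Finset.sum_sub_distrib]
    simp [Finset.card_univ]
  rw [houter]
  have h1 : ∑ i, A i ≤ 2 * L * (∑ i, f i x - ∑ i, f i xstar) :=
    my_sumA hn hL f hconv hdiff hsmooth xstar hstar x
  have h2 : (0:ℝ) ≤ ∑ i, B i := Finset.sum_nonneg fun i _ => sq_nonneg _
  linarith

end detlemmas

lemma my_grad_sum_zero {n : ℕ} (hn : 1 ≤ n) (f : Fin n → E → ℝ)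
    (hdiff : ∀ i, Differentiable ℝ (f i)) (xstar : E)
    (hmin : ∀ y, ∑ i, f i xstar ≤ ∑ i, f i y) :
    ∑ j, gradient (f j) xstar = 0 := by
  have hG : HasFDerivAt (fun x => ∑ j, f j x)
      (∑ j, InnerProductSpace.toDual ℝ E (gradient (f j) xstar)) xstar :=
    HasFDerivAt.fun_sum fun j _ => ((hdiff j) xstar).hasGradientAt.hasFDerivAt
  have hlm : IsLocalMin (fun x => ∑ j, f j x) xstar :=
    Filter.Eventually.of_forall fun y => hmin y
  have h0 := hlm.fderiv_eq_zero
  rw [hG.fderiv] at h0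
  have : InnerProductSpace.toDual ℝ E (∑ j, gradient (f j) xstar) = 0 := by
    rw [map_sum]; exact h0
  exact (InnerProductSpace.toDual ℝ E).map_eq_zero_iff.1 this

lemma my_coord_avg {n T : ℕ} (k : Fin T) (H : (Fin T → Fin n) → Fin n → ℝ)
    (hH : ∀ ω j, H (Function.update ω k j) = H ω) :
    (n : ℝ) * ∑ ω : Fin T → Fin n, H ω (ω k)
      = ∑ ω : Fin T → Fin n, ∑ i, H ω i := by
  classical
  set e := Equiv.funSplitAt k (Fin n) with he
  have hsym : ∀ (i : Fin n) (r : {j : Fin T // j ≠ k} → Fin n) (i' : Fin n),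
      e.symm (i, r) = Function.update (e.symm (i', r)) k i := by
    intro i r i'
    funext j
    by_cases h : j = k
    · subst h
      simp [he, Equiv.funSplitAt, Function.update_self]
    · simp [he, Equiv.funSplitAt, Function.update_of_ne h, h]
  have hk : ∀ (i : Fin n) (r : {j : Fin T // j ≠ k} → Fin n), e.symm (i, r) k = i := by
    intro i r
    simp [he, Equiv.funSplitAt]
  have hHind : ∀ (i i' : Fin n) (r : {j : Fin T // j ≠ k} → Fin n),
      H (e.symm (i, r)) = H (e.symm (i', r)) := by
    intro i i' r
    rw [hsym i r i', hH]
  have lhs1 : ∑ ω : Fin T → Fin n, H ω (ω k)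
      = ∑ p : Fin n × ({j : Fin T // j ≠ k} → Fin n), H (e.symm p) (e.symm p k) :=
    (Equiv.sum_comp e.symm (fun ω => H ω (ω k))).symm
  have rhs1 : ∑ ω : Fin T → Fin n, ∑ i, H ω i
      = ∑ p : Fin n × ({j : Fin T // j ≠ k} → Fin n), ∑ i, H (e.symm p) i :=
    (Equiv.sum_comp e.symm (fun ω => ∑ i, H ω i)).symm
  rw [lhs1, rhs1, Fintype.sum_prod_type, Fintype.sum_prod_type, Finset.sum_comm]
  conv_rhs => rw [Finset.sum_comm]
  rw [Finset.mul_sum]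
  refine Finset.sum_congr rfl fun r _ => ?_
  calc (n:ℝ) * ∑ i, H (e.symm (i,r)) (e.symm (i,r) k)
      = ∑ i', (n:ℝ) * H (e.symm (i',r)) i' := by
        rw [Finset.mul_sum]
        exact Finset.sum_congr rfl fun i _ => by rw [hk]
    _ = ∑ i', ∑ _i : Fin n, H (e.symm (i',r)) i' := by
        refine Finset.sum_congr rfl fun i' _ => ?_
        rw [Finset.sum_const, Finset.card_univ, Fintype.card_fin, nsmul_eq_mul]
    _ = ∑ i', ∑ i, H (e.symm (i,r)) i' := by
        refine Finset.sum_congr rfl fun i' _ => Finset.sum_congr rfl fun i _ => ?_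
        rw [hHind i i' r]
    _ = ∑ i, ∑ i', H (e.symm (i,r)) i' := Finset.sum_comm


lemma my_agree (n d T : ℕ) (hT : 0 < T)
    (f : Fin n → EuclideanSpace ℝ (Fin d) → ℝ)
    (proj : EuclideanSpace ℝ (Fin d) → EuclideanSpace ℝ (Fin d))
    (η : ℝ) (x1 : EuclideanSpace ℝ (Fin d)) :
    ∀ t, t ≤ T → ∀ ω ω' : Fin T → Fin n, (∀ k : Fin T, (k : ℕ) < t → ω k = ω' k) →
      adaLVRstate n d f proj η x1 (extIdx T hT ω) t
        = adaLVRstate n d f proj η x1 (extIdx T hT ω') t := by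
  intro t
  induction t with
  | zero => intro _ ω ω' _; rfl
  | succ t ih =>
    intro ht ω ω' h
    have htT : t < T := ht
    have h1 := ih (Nat.le_of_succ_le ht) ω ω' (fun k hk => h k (Nat.lt_succ_of_lt hk))
    have h2 : extIdx T hT ω (t + 1) = extIdx T hT ω' (t + 1) := by
      unfold extIdx
      apply h
      have : (t + 1 - 1) % T = t := by simp [Nat.mod_eq_of_lt htT]
      simp only [this]
      exact Nat.lt_succ_self t
    simp only [adaLVRstate]
    rw [h1, h2]

lemma my_idx_eq {n : ℕ} (T : ℕ) (hT : 0 < T) (s : ℕ) (hs : s < T) (ω : Fin T → Fin n) :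
    extIdx T hT ω (s + 1) = ω ⟨s, hs⟩ := by
  unfold extIdx
  exact congrArg ω (Fin.ext (by simp [Nat.mod_eq_of_lt hs]))

lemma my_update_agree (n d T : ℕ) (hT : 0 < T)
    (f : Fin n → EuclideanSpace ℝ (Fin d) → ℝ)
    (proj : EuclideanSpace ℝ (Fin d) → EuclideanSpace ℝ (Fin d))
    (η : ℝ) (x1 : EuclideanSpace ℝ (Fin d)) (s : ℕ) (hs : s < T)
    (ω : Fin T → Fin n) (j : Fin n) :
    adaLVRstate n d f proj η x1 (extIdx T hT (Function.update ω ⟨s, hs⟩ j)) s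
      = adaLVRstate n d f proj η x1 (extIdx T hT ω) s := by
  apply my_agree n d T hT f proj η x1 s (le_of_lt hs)
  intro k hk
  apply Function.update_of_ne
  intro hkk
  rw [hkk] at hk
  exact lt_irrefl s hk

noncomputable def myP (n d T : ℕ) (hT : 0 < T) (f : Fin n → EuclideanSpace ℝ (Fin d) → ℝ)
    (proj : EuclideanSpace ℝ (Fin d) → EuclideanSpace ℝ (Fin d)) (η : ℝ)
    (x1 : EuclideanSpace ℝ (Fin d)) (F : EuclideanSpace ℝ (Fin d) → ℝ)
    (xstar : EuclideanSpace ℝ (Fin d)) (s : ℕ) : ℝ :=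
  ∑ ω : Fin T → Fin n, (F (adaLVRstate n d f proj η x1 (extIdx T hT ω) s).1 - F xstar)

noncomputable def myA (n d T : ℕ) (hT : 0 < T) (f : Fin n → EuclideanSpace ℝ (Fin d) → ℝ)
    (proj : EuclideanSpace ℝ (Fin d) → EuclideanSpace ℝ (Fin d)) (η : ℝ)
    (x1 : EuclideanSpace ℝ (Fin d)) (xstar : EuclideanSpace ℝ (Fin d)) (s : ℕ) : ℝ :=
  ∑ ω : Fin T → Fin n, ∑ j,
    ‖gradient (f j) ((adaLVRstate n d f proj η x1 (extIdx T hT ω) s).2.1 j)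
      - gradient (f j) xstar‖ ^ 2

noncomputable def myQ (n d T : ℕ) (hT : 0 < T) (f : Fin n → EuclideanSpace ℝ (Fin d) → ℝ)
    (proj : EuclideanSpace ℝ (Fin d) → EuclideanSpace ℝ (Fin d)) (η : ℝ)
    (x1 : EuclideanSpace ℝ (Fin d)) (s : ℕ) : ℝ :=
  ∑ ω : Fin T → Fin n, ‖adaLVRg n d f proj η x1 (extIdx T hT ω) (s + 1)‖ ^ 2

section steps

variable {n d T : ℕ} (hn : 1 ≤ n) (hT : 0 < T) {L : ℝ} (hL : 0 < L)
  (f : Fin n → EuclideanSpace ℝ (Fin d) → ℝ)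
  (hconv : ∀ i, ConvexOn ℝ Set.univ (f i))
  (hdiff : ∀ i, Differentiable ℝ (f i))
  (hsmooth : ∀ i x y, ‖gradient (f i) x - gradient (f i) y‖ ≤ L * ‖x - y‖)
  (proj : EuclideanSpace ℝ (Fin d) → EuclideanSpace ℝ (Fin d)) (η : ℝ)
  (x1 : EuclideanSpace ℝ (Fin d))
  (F : EuclideanSpace ℝ (Fin d) → ℝ)
  (hF : F = fun x => (n : ℝ)⁻¹ * ∑ i, f i x)
  (xstar : EuclideanSpace ℝ (Fin d))
  (hstar : ∑ j, gradient (f j) xstar = 0)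

include hn hT hL hconv hdiff hsmooth hF hstar

lemma my_hFrel (x : EuclideanSpace ℝ (Fin d)) :
    ∑ i, f i x - ∑ i, f i xstar = (n : ℝ) * (F x - F xstar) := by
  have hn0 : (n : ℝ) ≠ 0 := Nat.cast_ne_zero.mpr (by omega)
  rw [hF]
  simp only
  field_simp

lemma my_stepG (s : ℕ) (hs : s < T) :
    (n : ℝ) * myQ n d T hT f proj η x1 s
      ≤ 4 * L * (n : ℝ) * myP n d T hT f proj η x1 F xstar s
        + 2 * myA n d T hT f proj η x1 xstar s := by
  classical
  set H : (Fin T → Fin n) → Fin n → ℝ := fun ω i =>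
    ‖gradient (f i) (adaLVRstate n d f proj η x1 (extIdx T hT ω) s).1
      - gradient (f i) ((adaLVRstate n d f proj η x1 (extIdx T hT ω) s).2.1 i)
      + (n : ℝ)⁻¹ • ∑ j, gradient (f j)
          ((adaLVRstate n d f proj η x1 (extIdx T hT ω) s).2.1 j)‖ ^ 2 with hH
  have hHinv : ∀ ω j, H (Function.update ω ⟨s, hs⟩ j) = H ω := by
    intro ω j
    funext i
    simp only [hH, my_update_agree n d T hT f proj η x1 s hs ω j]
  have hq : myQ n d T hT f proj η x1 s = ∑ ω : Fin T → Fin n, H ω (ω ⟨s, hs⟩) := by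
    apply Finset.sum_congr rfl
    intro ω _
    simp only [adaLVRg, Nat.add_sub_cancel, my_idx_eq T hT s hs ω, hH]
  rw [hq, my_coord_avg ⟨s, hs⟩ H hHinv]
  calc ∑ ω : Fin T → Fin n, ∑ i, H ω i
      ≤ ∑ ω : Fin T → Fin n,
          (4 * L * (∑ i, f i (adaLVRstate n d f proj η x1 (extIdx T hT ω) s).1
              - ∑ i, f i xstar)
            + 2 * ∑ j, ‖gradient (f j)
                ((adaLVRstate n d f proj η x1 (extIdx T hT ω) s).2.1 j)
                - gradient (f j) xstar‖ ^ 2) :=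
        Finset.sum_le_sum fun ω _ =>
          my_condG hn hL f hconv hdiff hsmooth xstar hstar _ _
    _ = 4 * L * (n : ℝ) * myP n d T hT f proj η x1 F xstar s
        + 2 * myA n d T hT f proj η x1 xstar s := by
        rw [Finset.sum_add_distrib, myP, myA, Finset.mul_sum, Finset.mul_sum]
        congr 1
        apply Finset.sum_congr rfl
        intro ω _
        rw [my_hFrel hn hT hL f hconv hdiff hsmooth F hF xstar hstar]
        ring

lemma my_stepS (s : ℕ) (hs : s < T) :
    (n : ℝ) * myA n d T hT f proj η x1 xstar (s + 1)
      ≤ ((n : ℝ) - 1) * myA n d T hT f proj η x1 xstar s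
        + 2 * L * (n : ℝ) * myP n d T hT f proj η x1 F xstar s := by
  classical
  set H : (Fin T → Fin n) → Fin n → ℝ := fun ω i =>
    ∑ j, ‖gradient (f j)
        (Function.update ((adaLVRstate n d f proj η x1 (extIdx T hT ω) s).2.1) i
          (adaLVRstate n d f proj η x1 (extIdx T hT ω) s).1 j)
      - gradient (f j) xstar‖ ^ 2 with hH
  have hHinv : ∀ ω j, H (Function.update ω ⟨s, hs⟩ j) = H ω := by
    intro ω j
    funext i
    simp only [hH, my_update_agree n d T hT f proj η x1 s hs ω j]
  have hq : myA n d T hT f proj η x1 xstar (s + 1)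
      = ∑ ω : Fin T → Fin n, H ω (ω ⟨s, hs⟩) := by
    apply Finset.sum_congr rfl
    intro ω _
    simp only [adaLVRstate, my_idx_eq T hT s hs ω, hH]
  rw [hq, my_coord_avg ⟨s, hs⟩ H hHinv]
  calc ∑ ω : Fin T → Fin n, ∑ i, H ω i
      ≤ ∑ ω : Fin T → Fin n,
          (((n : ℝ) - 1) * ∑ j, ‖gradient (f j)
                ((adaLVRstate n d f proj η x1 (extIdx T hT ω) s).2.1 j)
                - gradient (f j) xstar‖ ^ 2
            + 2 * L * (∑ i, f i (adaLVRstate n d f proj η x1 (extIdx T hT ω) s).1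
                - ∑ i, f i xstar)) :=
        Finset.sum_le_sum fun ω _ =>
          my_condS hn hL f hconv hdiff hsmooth xstar hstar _ _
    _ = ((n : ℝ) - 1) * myA n d T hT f proj η x1 xstar s
        + 2 * L * (n : ℝ) * myP n d T hT f proj η x1 F xstar s := by
        rw [Finset.sum_add_distrib, myP, myA, Finset.mul_sum, Finset.mul_sum]
        congr 1
        apply Finset.sum_congr rfl
        intro ω _
        rw [my_hFrel hn hT hL f hconv hdiff hsmooth F hF xstar hstar]
        ring

end steps

lemma my_reindex (T : ℕ) (g : ℕ → ℝ) :
    ∑ t ∈ Finset.Icc 1 T, g t = ∑ s ∈ Finset.range T, g (s + 1) := by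
  induction T with
  | zero => simp
  | succ T ih =>
      rw [Finset.sum_range_succ, ← ih, Finset.sum_Icc_succ_top (by omega : 1 ≤ T + 1)]

theorem stmt_18 (n d T : ℕ) (hn : 1 ≤ n) (hd : 1 ≤ d) (hT : 0 < T)
    (L η D : ℝ) (hL : 0 < L) (hη : 0 < η)
    (f : Fin n → EuclideanSpace ℝ (Fin d) → ℝ)
    (hconv : ∀ i, ConvexOn ℝ Set.univ (f i))
    (hdiff : ∀ i, Differentiable ℝ (f i))
    (hsmooth : ∀ i x y, ‖gradient (f i) x - gradient (f i) y‖ ≤ L * ‖x - y‖)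
    (F : EuclideanSpace ℝ (Fin d) → ℝ)
    (hF : F = fun x => (n : ℝ)⁻¹ * ∑ i, f i x)
    (X : Set (EuclideanSpace ℝ (Fin d))) (hXne : X.Nonempty)
    (hXcomp : IsCompact X) (hXconv : Convex ℝ X)
    (hdiam : ∀ x ∈ X, ∀ y ∈ X, ‖x - y‖ ≤ D)
    (xstar : EuclideanSpace ℝ (Fin d)) (hxstar : xstar ∈ X)
    (hmin : ∀ y, F xstar ≤ F y)
    (proj : EuclideanSpace ℝ (Fin d) → EuclideanSpace ℝ (Fin d))
    (hproj : ∀ z, proj z ∈ X ∧ ∀ y ∈ X, ‖proj z - z‖ ≤ ‖y - z‖)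
    (x1 : EuclideanSpace ℝ (Fin d)) (hx1 : x1 ∈ X) :
    (∑ ω : Fin T → Fin n, ∑ t ∈ Finset.Icc 1 T,
        ‖adaLVRg n d f proj η x1 (extIdx T hT ω) t‖ ^ 2) / (n : ℝ) ^ T
      ≤ 8 * L * ∑ t ∈ Finset.Icc 1 T,
          (∑ ω : Fin T → Fin n,
            (F (adaLVRx n d f proj η x1 (extIdx T hT ω) t) - F xstar)) / (n : ℝ) ^ T
        + 4 * L * n * (F x1 - F xstar) := by
  classical
  have hn0 : (n : ℝ) ≠ 0 := Nat.cast_ne_zero.mpr (by omega)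
  have hnpos : (0 : ℝ) < (n : ℝ) := by exact_mod_cast Nat.lt_of_lt_of_le Nat.zero_lt_one hn
  have hNT : (0 : ℝ) < (n : ℝ) ^ T := by positivity
  have hminsum : ∀ y, ∑ i, f i xstar ≤ ∑ i, f i y := by
    intro y
    have h := hmin y
    rw [hF] at h
    simp only at h
    exact (mul_le_mul_iff_right₀ (inv_pos.2 hnpos)).1 h
  have hstar : ∑ j, gradient (f j) xstar = 0 :=
    my_grad_sum_zero hn f hdiff xstar hminsum
  have hpnn : ∀ s, 0 ≤ myP n d T hT f proj η x1 F xstar s := fun s =>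
    Finset.sum_nonneg fun ω _ => sub_nonneg.2 (hmin _)
  have hann : ∀ s, 0 ≤ myA n d T hT f proj η x1 xstar s := fun s =>
    Finset.sum_nonneg fun ω _ => Finset.sum_nonneg fun j _ => sq_nonneg _
  set Pv := ∑ s ∈ Finset.range T, myP n d T hT f proj η x1 F xstar s with hPv
  set Av := ∑ s ∈ Finset.range T, myA n d T hT f proj η x1 xstar s with hAv
  set Qv := ∑ s ∈ Finset.range T, myQ n d T hT f proj η x1 s with hQv
  set a0 := myA n d T hT f proj η x1 xstar 0 with ha0def
  have hPnn : 0 ≤ Pv := Finset.sum_nonneg fun s _ => hpnn s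
  have hQbound : (n : ℝ) * Qv ≤ 4 * L * (n : ℝ) * Pv + 2 * Av := by
    rw [hQv, hPv, hAv, Finset.mul_sum, Finset.mul_sum, Finset.mul_sum,
      ← Finset.sum_add_distrib]
    exact Finset.sum_le_sum fun s hs =>
      my_stepG hn hT hL f hconv hdiff hsmooth proj η x1 F hF xstar hstar s
        (Finset.mem_range.1 hs)
  have hAsplit : Av = (∑ s ∈ Finset.range (T - 1),
      myA n d T hT f proj η x1 xstar (s + 1)) + a0 := by
    have h := Finset.sum_range_succ' (fun s => myA n d T hT f proj η x1 xstar s) (T - 1)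
    rw [Nat.sub_add_cancel hT] at h
    rw [hAv, ha0def, h]
  have hsubA : ∑ s ∈ Finset.range (T - 1), myA n d T hT f proj η x1 xstar s ≤ Av :=
    Finset.sum_le_sum_of_subset_of_nonneg
      (Finset.range_subset_range.2 (Nat.sub_le T 1)) (fun s _ _ => hann s)
  have hsubP : ∑ s ∈ Finset.range (T - 1), myP n d T hT f proj η x1 F xstar s ≤ Pv :=
    Finset.sum_le_sum_of_subset_of_nonneg
      (Finset.range_subset_range.2 (Nat.sub_le T 1)) (fun s _ _ => hpnn s)
  have hrecsum : (n : ℝ) * ∑ s ∈ Finset.range (T - 1),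
        myA n d T hT f proj η x1 xstar (s + 1)
      ≤ ((n : ℝ) - 1) * (∑ s ∈ Finset.range (T - 1), myA n d T hT f proj η x1 xstar s)
        + 2 * L * (n : ℝ)
          * ∑ s ∈ Finset.range (T - 1), myP n d T hT f proj η x1 F xstar s := by
    rw [Finset.mul_sum, Finset.mul_sum, Finset.mul_sum, ← Finset.sum_add_distrib]
    exact Finset.sum_le_sum fun s hs =>
      my_stepS hn hT hL f hconv hdiff hsmooth proj η x1 F hF xstar hstar s
        (lt_of_lt_of_le (Finset.mem_range.1 hs) (Nat.sub_le T 1))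
  have hn1 : (0 : ℝ) ≤ (n : ℝ) - 1 := by
    have : (1 : ℝ) ≤ (n : ℝ) := by exact_mod_cast hn
    linarith
  have hAbound : Av ≤ (n : ℝ) * a0 + 2 * L * (n : ℝ) * Pv := by
    have h1 : ((n : ℝ) - 1) * (∑ s ∈ Finset.range (T - 1),
          myA n d T hT f proj η x1 xstar s) ≤ ((n : ℝ) - 1) * Av :=
      mul_le_mul_of_nonneg_left hsubA hn1
    have h2 : 2 * L * (n : ℝ) * ∑ s ∈ Finset.range (T - 1),
          myP n d T hT f proj η x1 F xstar s ≤ 2 * L * (n : ℝ) * Pv :=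
      mul_le_mul_of_nonneg_left hsubP (by positivity)
    have h3 : (n : ℝ) * ∑ s ∈ Finset.range (T - 1), myA n d T hT f proj η x1 xstar (s + 1)
        ≤ ((n : ℝ) - 1) * Av + 2 * L * (n : ℝ) * Pv := by linarith
    have h4 : (n : ℝ) * Av = (n : ℝ) * ∑ s ∈ Finset.range (T - 1),
        myA n d T hT f proj η x1 xstar (s + 1) + (n : ℝ) * a0 := by
      rw [hAsplit]; ring
    have h6 : (n : ℝ) * Av - ((n : ℝ) - 1) * Av = Av := by ring
    linarith
  have ha0 : a0 ≤ (n : ℝ) ^ T * (2 * L * ((n : ℝ) * (F x1 - F xstar))) := by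
    have hpoint : ∑ j, ‖gradient (f j) x1 - gradient (f j) xstar‖ ^ 2
        ≤ 2 * L * ((n : ℝ) * (F x1 - F xstar)) := by
      have h1 := my_sumA hn hL f hconv hdiff hsmooth xstar hstar x1
      rw [my_hFrel hn hT hL f hconv hdiff hsmooth F hF xstar hstar x1] at h1
      linarith
    rw [ha0def, myA]
    calc ∑ ω : Fin T → Fin n, ∑ j, ‖gradient (f j)
          ((adaLVRstate n d f proj η x1 (extIdx T hT ω) 0).2.1 j)
          - gradient (f j) xstar‖ ^ 2
        = ∑ _ω : Fin T → Fin n, ∑ j, ‖gradient (f j) x1 - gradient (f j) xstar‖ ^ 2 := by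
          apply Finset.sum_congr rfl
          intro ω _
          simp only [adaLVRstate]
      _ ≤ ∑ _ω : Fin T → Fin n, 2 * L * ((n : ℝ) * (F x1 - F xstar)) :=
          Finset.sum_le_sum fun ω _ => hpoint
      _ = (n : ℝ) ^ T * (2 * L * ((n : ℝ) * (F x1 - F xstar))) := by
          rw [Finset.sum_const, Finset.card_univ, Fintype.card_fun, Fintype.card_fin,
            Fintype.card_fin, nsmul_eq_mul]
          push_cast
          ring
  have hfinal : Qv ≤ 8 * L * Pv + 4 * L * (n : ℝ) * (F x1 - F xstar) * (n : ℝ) ^ T := by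
    have h4 : (n : ℝ) * Qv ≤ (n : ℝ) * (8 * L * Pv + 2 * a0) := by nlinarith
    have h5 : Qv ≤ 8 * L * Pv + 2 * a0 := (mul_le_mul_iff_right₀ hnpos).1 h4
    nlinarith [ha0]
  have hgoalL : (∑ ω : Fin T → Fin n, ∑ t ∈ Finset.Icc 1 T,
      ‖adaLVRg n d f proj η x1 (extIdx T hT ω) t‖ ^ 2) = Qv := by
    rw [Finset.sum_comm, hQv, my_reindex]
    apply Finset.sum_congr rfl
    intro s _
    rw [myQ]
  have hgoalR : ∑ t ∈ Finset.Icc 1 T, (∑ ω : Fin T → Fin n,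
      (F (adaLVRx n d f proj η x1 (extIdx T hT ω) t) - F xstar)) / (n : ℝ) ^ T
      = Pv / (n : ℝ) ^ T := by
    rw [hPv, ← Finset.sum_div]
    congr 1
    rw [my_reindex]
    apply Finset.sum_congr rfl
    intro s _
    rw [myP]
    apply Finset.sum_congr rfl
    intro ω _
    have h1 : (s + 1) - 1 = s := by omega
    rw [adaLVRx, h1]
  rw [hgoalL, hgoalR]
  rw [div_le_iff₀ hNT]
  calc Qv ≤ 8 * L * Pv + 4 * L * (n : ℝ) * (F x1 - F xstar) * (n : ℝ) ^ T := hfinal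
    _ = (8 * L * (Pv / (n : ℝ) ^ T) + 4 * L * (n : ℝ) * (F x1 - F xstar)) * (n : ℝ) ^ T := by
        field_simp
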